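/- If every unit disk graph of height 2 admits a conflict-free 2-coloring, then every unit disk graph admits a conflict-free 4-coloring. (The derivation subdivides the plane into horizontal strips of height 2 and colors the subgraphs in even strips with colors {1,2} and those in odd strips with colors {3,4}.) -/

import Mathlib

/-- A conflict-free coloring of `G` with `k` colors: a partial coloring
(uncolored vertices get `none`) such that every vertex has, in its closed
neighborhood, a colored vertex whose color occurs exactly once there. -/
def IsCFColoring {V : Type*} (G : SimpleGraph V) {k : ℕ} (χ : V → Option (Fin k)) : Prop :=
  ∀ v : V, ∃ u ∈ insert v (G.neighborSet v), (χ u).isSome ∧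
    ∀ w ∈ insert v (G.neighborSet v), χ w = χ u → w = u

/-- `G` admits a conflict-free coloring with `k` colors. -/
def HasCFColoring {V : Type*} (G : SimpleGraph V) (k : ℕ) : Prop :=
  ∃ χ : V → Option (Fin k), IsCFColoring G χ

/-- The unit disk graph on points `p`: distinct vertices are adjacent iff the
Euclidean distance of their points is at most 2 (the unit disks intersect). -/
def unitDiskGraph {V : Type*} (p : V → EuclideanSpace ℝ (Fin 2)) : SimpleGraph V where
  Adj u v := u ≠ v ∧ dist (p u) (p v) ≤ 2
  symm := by
    constructor
    intro u v ⟨h1, h2⟩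
    exact ⟨h1.symm, by rwa [dist_comm]⟩
  loopless := by
    constructor
    intro v ⟨h1, _⟩
    exact h1 rfl


lemma coord_le (x y : EuclideanSpace ℝ (Fin 2)) : |x 1 - y 1| ≤ dist x y := by
  rw [EuclideanSpace.dist_eq]
  rw [← Real.sqrt_sq (abs_nonneg (x 1 - y 1))]
  apply Real.sqrt_le_sqrt
  rw [sq_abs]
  calc (x 1 - y 1)^2 ≤ ∑ i, (x i - y i)^2 :=
        Finset.single_le_sum (f := fun i => (x i - y i)^2) (fun i _ => sq_nonneg _) (Finset.mem_univ 1)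
    _ = ∑ i, dist (x i) (y i) ^ 2 := by simp [Real.dist_eq, sq_abs]

lemma floor_close {a b : ℝ} (hd : |a - b| ≤ 2) : |⌊a/2⌋ - ⌊b/2⌋| ≤ 1 := by
  rw [abs_le] at hd ⊢
  constructor
  · have : ⌊b/2⌋ ≤ ⌊a/2 + 1⌋ := Int.floor_le_floor (by linarith)
    rw [Int.floor_add_one] at this; omega
  · have : ⌊a/2⌋ ≤ ⌊b/2 + 1⌋ := Int.floor_le_floor (by linarith)
    rw [Int.floor_add_one] at this; omega

lemma shift_apply (x : EuclideanSpace ℝ (Fin 2)) (c : ℝ) :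
    (x - EuclideanSpace.single (1 : Fin 2) c) 1 = x 1 - c := by
  simp [EuclideanSpace.single_apply]

theorem stmt9
    (h : ∀ (V : Type) [Fintype V] (p : V → EuclideanSpace ℝ (Fin 2)),
      (∀ v : V, p v 1 ∈ Set.Icc (0 : ℝ) 2) → HasCFColoring (unitDiskGraph p) 2) :
    ∀ (V : Type) [Fintype V] (p : V → EuclideanSpace ℝ (Fin 2)),
      HasCFColoring (unitDiskGraph p) 4 := by
  intro V _ p
  classical
  have hq : ∀ i : ℤ, ∃ χ : {v : V // ⌊p v 1 / 2⌋ = i} → Option (Fin 2),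
      IsCFColoring (unitDiskGraph
        (fun v : {v : V // ⌊p v 1 / 2⌋ = i} =>
          p v.1 - EuclideanSpace.single (1 : Fin 2) (2 * (i : ℝ)))) χ := by
    intro i
    apply h
    intro v
    have hv := v.2
    have h1 : (⌊p v.1 1 / 2⌋ : ℝ) ≤ p v.1 1 / 2 := Int.floor_le _
    have h2 : p v.1 1 / 2 < ⌊p v.1 1 / 2⌋ + 1 := Int.lt_floor_add_one _
    rw [hv] at h1 h2
    rw [shift_apply, Set.mem_Icc]
    constructor <;> linarith
  choose χi hχi using hq
  have hdq : ∀ (i : ℤ) (u v : {v : V // ⌊p v 1 / 2⌋ = i}),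
      dist (p u.1 - EuclideanSpace.single (1 : Fin 2) (2 * (i : ℝ)))
           (p v.1 - EuclideanSpace.single (1 : Fin 2) (2 * (i : ℝ)))
        = dist (p u.1) (p v.1) := fun i u v => dist_sub_right _ _ _
  set emb : ℤ → Fin 2 → Fin 4 :=
    fun i c => if Even i then ⟨c.1, by omega⟩ else ⟨c.1 + 2, by omega⟩ with hemb
  have embinj : ∀ i j c d, emb i c = emb j d → (Even i ↔ Even j) ∧ c = d := by
    intro i j c d hcd
    have hc := c.2; have hd := d.2
    simp only [hemb] at hcd
    by_cases hi : Even i <;> by_cases hj : Even j <;>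
      simp [hi, hj, Fin.ext_iff] at hcd ⊢ <;> omega
  set χ : V → Option (Fin 4) :=
    fun v => (χi ⌊p v 1 / 2⌋ ⟨v, rfl⟩).map (emb ⌊p v 1 / 2⌋) with hχdef
  have hχeq : ∀ (u : V) (i : ℤ) (hu : ⌊p u 1 / 2⌋ = i),
      χ u = (χi i ⟨u, hu⟩).map (emb i) := by
    intro u i hu; subst hu; rfl
  refine ⟨χ, ?_⟩
  intro v
  set i := ⌊p v 1 / 2⌋ with hi
  obtain ⟨u', hu'mem, hu'some, hu'uniq⟩ := hχi i ⟨v, hi.symm⟩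
  have hu'big : u'.1 ∈ insert v ((unitDiskGraph p).neighborSet v) := by
    rcases Set.mem_insert_iff.mp hu'mem with heq | hadj
    · left; rw [heq]
    · right
      obtain ⟨hne, hd⟩ := hadj
      rw [hdq] at hd
      exact ⟨fun e => hne (Subtype.ext e), hd⟩
  refine ⟨u'.1, hu'big, ?_, ?_⟩
  · rw [hχeq u'.1 i u'.2]
    simpa using hu'some
  · intro w hw hχw
    obtain ⟨c, hc⟩ := Option.isSome_iff_exists.mp hu'some
    have hχu : χ u'.1 = some (emb i c) := by
      rw [hχeq u'.1 i u'.2]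
      have he : (⟨u'.1, u'.2⟩ : {v : V // ⌊p v 1 / 2⌋ = i}) = u' := rfl
      rw [he, hc]; rfl
    rw [hχu] at hχw
    obtain ⟨d, hd, hde⟩ := Option.map_eq_some_iff.mp (hχeq w _ rfl ▸ hχw)
    have hpar := embinj _ _ _ _ hde
    have hwi : ⌊p w 1 / 2⌋ = i := by
      have hclose : |(⌊p w 1 / 2⌋ : ℤ) - i| ≤ 1 := by
        rcases Set.mem_insert_iff.mp hw with heq | hadj
        · rw [heq, ← hi]; simp
        · obtain ⟨hne, hdd⟩ := hadj
          have hd2 : dist (p w) (p v) ≤ 2 := by rwa [dist_comm] at hdd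
          exact floor_close ((coord_le (p w) (p v)).trans hd2)
      have h1 := hpar.1
      rw [Int.even_iff, Int.even_iff] at h1
      rw [abs_le] at hclose
      omega
    have hχiw : χi i ⟨w, hwi⟩ = χi i u' := by
      have h3 := hχeq w i hwi
      rw [hχw] at h3
      obtain ⟨d', hd', hde'⟩ := Option.map_eq_some_iff.mp h3.symm
      have : d' = c := (embinj _ _ _ _ hde').2
      rw [hd', this, hc]
    have hmem : (⟨w, hwi⟩ : {v : V // ⌊p v 1 / 2⌋ = i}) ∈
        insert (⟨v, hi.symm⟩ : {v : V // ⌊p v 1 / 2⌋ = i})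
          ((unitDiskGraph (fun v : {v : V // ⌊p v 1 / 2⌋ = i} =>
            p v.1 - EuclideanSpace.single (1 : Fin 2) (2 * (i : ℝ)))).neighborSet ⟨v, hi.symm⟩) := by
      rcases Set.mem_insert_iff.mp hw with heq | hadj
      · left; exact Subtype.ext heq
      · right
        obtain ⟨hne, hdd⟩ := hadj
        refine ⟨fun e => hne (congrArg Subtype.val e), ?_⟩
        rw [hdq]; exact hdd
    have := hu'uniq ⟨w, hwi⟩ hmem hχiw
    exact congrArg Subtype.val this
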